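/- Let H be a Hilbert space, I = [a,b) a bounded interval, and 1 ≤ p < q < ∞. Then: (a) there is a constant C(p) such that every u ∈ U^p(I)H with lim_{t↑b} u(t) = 0 belongs to V^p(I)H with ‖u‖_{V^p(I)H} ≤ C(p) ‖u‖_{U^p(I)H}; (b) there is a constant C(p,q) such that every right-continuous u : I → H with finite V^p(I)H norm and with u(a) = 0 belongs to U^q(I)H with ‖u‖_{U^q(I)H} ≤ C(p,q) ‖u‖_{V^p(I)H}. -/

import Mathlib

open scoped ENNReal
open MeasureTheory

attribute [local instance] Classical.propDecidable

namespace UVSpaces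

variable {H : Type*} [NormedAddCommGroup H] [InnerProductSpace ℂ H]

/-- `V^p([a,b)) H` norm (with the convention `u(b) := 0`). -/
noncomputable def Vnorm (p a b : ℝ) (u : ℝ → H) : ℝ≥0∞ :=
  ⨆ (K : ℕ) (t : Fin (K+1) → ℝ) (_ : Monotone t) (_ : t 0 = a) (_ : t (Fin.last K) = b),
    ENNReal.ofReal ((∑ k : Fin K,
      ‖(if t k.succ = b then 0 else u (t k.succ)) -
          (if t k.castSucc = b then 0 else u (t k.castSucc))‖ ^ p) ^ (1/p))

/-- `U^p([a,b)) H` atom. -/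
def IsAtom (p a b : ℝ) (A : ℝ → H) : Prop :=
  ∃ (K : ℕ) (t : Fin (K+1) → ℝ) (ψ : Fin K → H),
    Monotone t ∧ t 0 = a ∧ t (Fin.last K) = b ∧
    (∑ k : Fin K, ‖ψ k‖ ^ p) ≤ 1 ∧
    ∀ x, A x = ∑ k : Fin K, if t k.castSucc ≤ x ∧ x < t k.succ then ψ k else 0

/-- `U^p([a,b)) H` (atomic) norm. -/
noncomputable def Unorm (p a b : ℝ) (u : ℝ → H) : ℝ≥0∞ :=
  ⨅ (c : ℕ → ℂ) (A : ℕ → ℝ → H)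
    (_ : Summable fun n => ‖c n‖) (_ : ∀ n, IsAtom p a b (A n))
    (_ : ∀ t ∈ Set.Ico a b, HasSum (fun n => c n • A n t) (u t)),
    ENNReal.ofReal (∑' n, ‖c n‖)

/-! ### Auxiliary lemmas -/

/-- In a cell decomposition, the sum of indicators picks the unique cell containing `x`. -/
lemma sum_ite_cell {J : ℕ} {s : Fin (J+1) → ℝ} (hs : Monotone s) {x : ℝ} {j : Fin J}
    (h1 : s j.castSucc ≤ x) (h2 : x < s j.succ) (φ : Fin J → H) :
    (∑ k : Fin J, if s k.castSucc ≤ x ∧ x < s k.succ then φ k else 0) = φ j := by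
  rw [Finset.sum_eq_single_of_mem j (Finset.mem_univ j)]
  · rw [if_pos ⟨h1, h2⟩]
  · intro i _ hij
    rw [if_neg]
    rintro ⟨hi1, hi2⟩
    rcases lt_or_gt_of_ne hij with h | h
    · exact absurd (hi2.trans_le ((hs (Fin.succ_le_castSucc_iff.mpr h)).trans h1)) (lt_irrefl x)
    · exact absurd (h2.trans_le ((hs (Fin.succ_le_castSucc_iff.mpr h)).trans hi1)) (lt_irrefl x)

/-- Any point of `[a,b)` lies in some cell of a partition. -/
lemma exists_cell {a b x : ℝ} {K : ℕ} {t : Fin (K+1) → ℝ} (ht : Monotone t)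
    (h0 : t 0 = a) (hl : t (Fin.last K) = b) (hax : a ≤ x) (hxb : x < b) :
    ∃ j : Fin K, t j.castSucc ≤ x ∧ x < t j.succ := by
  classical
  set S : Finset (Fin (K+1)) := Finset.univ.filter (fun i => t i ≤ x) with hS
  have hne : S.Nonempty := ⟨0, by simp [hS, h0, hax]⟩
  have hi0m : S.max' hne ∈ S := Finset.max'_mem _ hne
  have hi0x : t (S.max' hne) ≤ x := by
    have := Finset.mem_filter.mp hi0m; exact this.2
  have hne_last : S.max' hne ≠ Fin.last K := by
    intro h; rw [h, hl] at hi0x; exact absurd hi0x (not_le.mpr hxb)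
  obtain ⟨j, hj⟩ := Fin.exists_castSucc_eq.mpr hne_last
  refine ⟨j, by rw [hj]; exact hi0x, ?_⟩
  by_contra h
  push_neg at h
  have hmem : j.succ ∈ S := by simp [hS, h]
  have hle := Finset.le_max' S _ hmem
  rw [← hj] at hle
  exact absurd (lt_of_lt_of_le (Fin.castSucc_lt_succ (i := j)) hle) (lt_irrefl _)

lemma IsAtom.apply_of_ge {p a b : ℝ} {A : ℝ → H} (h : IsAtom p a b A) {x : ℝ} (hx : b ≤ x) :
    A x = 0 := by
  obtain ⟨K, t, ψ, ht, h0, hl, hψ, hA⟩ := h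
  rw [hA x]
  apply Finset.sum_eq_zero
  intro k _
  rw [if_neg]
  rintro ⟨-, h2⟩
  have : t k.succ ≤ b := hl ▸ ht (Fin.le_last _)
  exact absurd (h2.trans_le this) (not_lt.mpr hx)

lemma norm_sub_rpow_le {p : ℝ} (hp : 1 ≤ p) (x y : H) :
    ‖x - y‖ ^ p ≤ 2 ^ p * (‖x‖ ^ p + ‖y‖ ^ p) := by
  have hp0 : (0:ℝ) ≤ p := zero_le_one.trans hp
  have h1 : ‖x - y‖ ≤ 2 * max ‖x‖ ‖y‖ := by
    calc ‖x - y‖ ≤ ‖x‖ + ‖y‖ := norm_sub_le x y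
    _ ≤ max ‖x‖ ‖y‖ + max ‖x‖ ‖y‖ := add_le_add (le_max_left _ _) (le_max_right _ _)
    _ = 2 * max ‖x‖ ‖y‖ := (two_mul _).symm
  calc ‖x - y‖ ^ p ≤ (2 * max ‖x‖ ‖y‖) ^ p := Real.rpow_le_rpow (norm_nonneg _) h1 hp0
  _ = 2 ^ p * (max ‖x‖ ‖y‖) ^ p :=
      Real.mul_rpow (by norm_num) (le_max_of_le_left (norm_nonneg _))
  _ ≤ 2 ^ p * (‖x‖ ^ p + ‖y‖ ^ p) := by
      apply mul_le_mul_of_nonneg_left _ (Real.rpow_nonneg (by norm_num) p)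
      rcases max_cases ‖x‖ ‖y‖ with ⟨h, -⟩ | ⟨h, -⟩ <;> rw [h]
      · have := Real.rpow_nonneg (norm_nonneg y) p; linarith
      · have := Real.rpow_nonneg (norm_nonneg x) p; linarith

/-- The `p`-variation sum of an atom along any partition is at most `4^p`. -/
lemma IsAtom.variation_le {p a b : ℝ} (hp : 1 ≤ p) {A : ℝ → H} (hA : IsAtom p a b A)
    {K : ℕ} {t : Fin (K+1) → ℝ} (ht : Monotone t) (h0 : t 0 = a) (hl : t (Fin.last K) = b) :
    ∑ k : Fin K, ‖A (t k.succ) - A (t k.castSucc)‖ ^ p ≤ 4 ^ p := by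
  classical
  have hp0 : (0:ℝ) < p := lt_of_lt_of_le zero_lt_one hp
  obtain ⟨J, s, ψ, hs, hs0, hsl, hψ, hAx⟩ := hA
  set ψ' : Fin (J+1) → H := Fin.snoc ψ 0 with hψ'
  have hne : ∀ k : Fin (K+1), (Finset.univ.filter (fun j : Fin (J+1) => s j ≤ t k)).Nonempty := by
    intro k
    refine ⟨0, ?_⟩
    simp only [Finset.mem_filter, Finset.mem_univ, true_and, hs0]
    rw [← h0]; exact ht (Fin.zero_le k)
  set n : Fin (K+1) → Fin (J+1) :=
    fun k => (Finset.univ.filter (fun j : Fin (J+1) => s j ≤ t k)).max' (hne k) with hn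
  have hsn : ∀ k, s (n k) ≤ t k := by
    intro k
    have := Finset.max'_mem _ (hne k)
    exact (Finset.mem_filter.mp this).2
  have hmax : ∀ k (j : Fin (J+1)), s j ≤ t k → j ≤ n k := by
    intro k j hj
    exact Finset.le_max' _ _ (by simp [hj])
  have hmono : Monotone n := by
    intro k k' hk
    exact hmax k' (n k) ((hsn k).trans (ht hk))
  have hval : ∀ k, A (t k) = ψ' (n k) := by
    intro k
    by_cases hnk : n k = Fin.last J
    · have h1 : b ≤ t k := by rw [← hsl, ← hnk]; exact hsn k
      have : A (t k) = 0 := IsAtom.apply_of_ge ⟨J, s, ψ, hs, hs0, hsl, hψ, hAx⟩ h1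
      rw [this, hnk, hψ', Fin.snoc_last]
    · obtain ⟨j, hj⟩ := Fin.exists_castSucc_eq.mpr hnk
      have h1 : s j.castSucc ≤ t k := by rw [hj]; exact hsn k
      have h2 : t k < s j.succ := by
        by_contra h
        push_neg at h
        have := hmax k _ h
        rw [← hj] at this
        exact absurd (lt_of_lt_of_le (Fin.castSucc_lt_succ (i := j)) this) (lt_irrefl _)
      rw [hAx (t k), sum_ite_cell hs h1 h2 ψ, ← hj, hψ', Fin.snoc_castSucc]
  -- replace and estimate
  have hψ'sum : ∑ j : Fin (J+1), ‖ψ' j‖ ^ p ≤ 1 := by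
    rw [hψ']
    rw [show (∑ j : Fin (J+1), ‖(Fin.snoc ψ (0:H) : Fin (J+1) → H) j‖ ^ p)
        = ∑ j : Fin J, ‖ψ j‖ ^ p + ‖(0:H)‖ ^ p from ?_]
    · rw [norm_zero, Real.zero_rpow (ne_of_gt hp0), add_zero]; exact hψ
    · rw [← Fin.sum_snoc (‖(0:H)‖ ^ p) (fun j => ‖ψ j‖ ^ p)]
      apply Finset.sum_congr rfl
      intro i _
      induction i using Fin.lastCases with
      | last => rw [Fin.snoc_last, Fin.snoc_last]
      | cast j => rw [Fin.snoc_castSucc, Fin.snoc_castSucc]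
  have hsub : ∀ (f : Fin K → Fin (J+1)) (D : Finset (Fin K)),
      (∀ k ∈ D, ∀ k' ∈ D, k < k' → f k < f k') →
      ∑ k ∈ D, ‖ψ' (f k)‖ ^ p ≤ 1 := by
    intro f D hinj
    have hinj' : ∀ x ∈ D, ∀ y ∈ D, f x = f y → x = y := by
      intro x hx y hy hxy
      rcases lt_trichotomy x y with h | h | h
      · exact absurd hxy (ne_of_lt (hinj x hx y hy h))
      · exact h
      · exact absurd hxy.symm (ne_of_lt (hinj y hy x hx h))
    calc ∑ k ∈ D, ‖ψ' (f k)‖ ^ p = ∑ j ∈ D.image f, ‖ψ' j‖ ^ p :=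
          (Finset.sum_image (f := fun j => ‖ψ' j‖ ^ p) hinj').symm
    _ ≤ ∑ j : Fin (J+1), ‖ψ' j‖ ^ p := by
        apply Finset.sum_le_sum_of_subset_of_nonneg (Finset.subset_univ _)
        intro i _ _
        exact Real.rpow_nonneg (norm_nonneg _) p
    _ ≤ 1 := hψ'sum
  set D : Finset (Fin K) := Finset.univ.filter (fun k => n k.castSucc < n k.succ) with hD
  have hDsum : ∑ k : Fin K, ‖A (t k.succ) - A (t k.castSucc)‖ ^ p
      = ∑ k ∈ D, ‖A (t k.succ) - A (t k.castSucc)‖ ^ p := by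
    symm
    apply Finset.sum_filter_of_ne
    intro k _ hk
    rcases lt_or_eq_of_le (hmono (le_of_lt (Fin.castSucc_lt_succ (i := k)))) with h | h
    · exact h
    · exfalso
      apply hk
      rw [hval, hval, ← h, sub_self, norm_zero, Real.zero_rpow (ne_of_gt hp0)]
  rw [hDsum]
  have hterm : ∀ k ∈ D, ‖A (t k.succ) - A (t k.castSucc)‖ ^ p
      ≤ 2 ^ p * (‖ψ' (n k.succ)‖ ^ p + ‖ψ' (n k.castSucc)‖ ^ p) := by
    intro k _
    rw [hval, hval]
    exact norm_sub_rpow_le hp _ _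
  calc ∑ k ∈ D, ‖A (t k.succ) - A (t k.castSucc)‖ ^ p
      ≤ ∑ k ∈ D, 2 ^ p * (‖ψ' (n k.succ)‖ ^ p + ‖ψ' (n k.castSucc)‖ ^ p) :=
        Finset.sum_le_sum hterm
  _ = 2 ^ p * (∑ k ∈ D, ‖ψ' (n k.succ)‖ ^ p + ∑ k ∈ D, ‖ψ' (n k.castSucc)‖ ^ p) := by
        rw [← Finset.mul_sum, ← Finset.sum_add_distrib]
  _ ≤ 2 ^ p * (1 + 1) := by
        apply mul_le_mul_of_nonneg_left _ (Real.rpow_nonneg (by norm_num) p)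
        apply add_le_add
        · apply hsub _ D
          intro k hk k' hk' hlt
          have h1 : n k.succ ≤ n k'.castSucc := hmono (Fin.succ_le_castSucc_iff.mpr hlt)
          have h2 : n k'.castSucc < n k'.succ := by
            rw [hD] at hk'; exact (Finset.mem_filter.mp hk').2
          exact lt_of_le_of_lt h1 h2
        · apply hsub _ D
          intro k hk k' hk' hlt
          have h2 : n k.castSucc < n k.succ := by
            rw [hD] at hk; exact (Finset.mem_filter.mp hk).2
          have h1 : n k.succ ≤ n k'.castSucc := hmono (Fin.succ_le_castSucc_iff.mpr hlt)
          exact lt_of_lt_of_le h2 h1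
  _ ≤ 4 ^ p := by
        have h2p : (2:ℝ) * 2 ^ p ≤ 2 ^ p * 2 ^ p := by
          apply mul_le_mul_of_nonneg_right _ (Real.rpow_nonneg (by norm_num) p)
          calc (2:ℝ) = 2 ^ (1:ℝ) := (Real.rpow_one 2).symm
          _ ≤ 2 ^ p := Real.rpow_le_rpow_of_exponent_le one_le_two hp
        have : (4:ℝ) ^ p = 2 ^ p * 2 ^ p := by
          rw [show (4:ℝ) = 2 * 2 by norm_num, Real.mul_rpow (by norm_num) (by norm_num)]
        rw [this]
        linarith
set_option linter.unusedSectionVars false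
set_option synthInstance.maxHeartbeats 1000000
set_option maxHeartbeats 1000000
set_option linter.unusedVariables false

lemma vnorm_le_of_rep {p a b : ℝ} (hp : 1 ≤ p) {u : ℝ → H} (c : ℕ → ℂ) (A : ℕ → ℝ → H)
    (hc : Summable fun n => ‖c n‖) (hA : ∀ n, IsAtom p a b (A n))
    (hrep : ∀ x ∈ Set.Ico a b, HasSum (fun n => c n • A n x) (u x)) :
    Vnorm p a b u ≤ ENNReal.ofReal (4 * ∑' n, ‖c n‖) := by
  have hp0 : (0:ℝ) < p := lt_of_lt_of_le zero_lt_one hp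
  rw [Vnorm]
  refine iSup_le fun K => iSup_le fun t => iSup_le fun ht => iSup_le fun h0 => iSup_le fun hl => ?_
  apply ENNReal.ofReal_le_ofReal
  -- set up PiLp
  set P : ℝ≥0∞ := ENNReal.ofReal p with hP
  haveI : Fact (1 ≤ P) := ⟨ENNReal.one_le_ofReal.mpr hp⟩
  have hPt : P.toReal = p := ENNReal.toReal_ofReal (le_of_lt hp0)
  set Φ : (Fin K → H) →L[ℂ] PiLp P (fun _ : Fin K => H) :=
    (PiLp.continuousLinearEquiv P ℂ (fun _ : Fin K => H)).symm.toContinuousLinearMap with hΦ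
  have hΦapp : ∀ (v : Fin K → H) (k : Fin K), Φ v k = v k := fun v k => rfl
  have hΦnorm : ∀ v : Fin K → H, ‖Φ v‖ = (∑ k : Fin K, ‖v k‖ ^ p) ^ (1/p) := by
    intro v
    rw [PiLp.norm_eq_sum (by rw [hPt]; exact hp0)]
    simp only [hPt, hΦapp]
  set vA : ℕ → (Fin K → H) := fun n k => A n (t k.succ) - A n (t k.castSucc) with hvA
  set vG : Fin K → H := fun k =>
    (if t k.succ = b then 0 else u (t k.succ)) - (if t k.castSucc = b then 0 else u (t k.castSucc))
    with hvG
  -- pointwise HasSum at partition points (with the value-at-b convention)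
  have hpt : ∀ k : Fin (K+1),
      HasSum (fun n => c n • A n (t k)) (if t k = b then 0 else u (t k)) := by
    intro k
    by_cases hk : t k = b
    · rw [if_pos hk]
      have : (fun n => c n • A n (t k)) = fun n => (0:H) := by
        funext n
        rw [hk, (hA n).apply_of_ge (le_refl b), smul_zero]
      rw [this]
      exact hasSum_zero
    · rw [if_neg hk]
      apply hrep
      constructor
      · rw [← h0]; exact ht (Fin.zero_le k)
      · exact lt_of_le_of_ne (hl ▸ ht (Fin.le_last k)) hk
  have hsumpi : HasSum (fun n => c n • vA n) vG := by
    rw [Pi.hasSum]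
    intro k
    have := (hpt k.succ).sub (hpt k.castSucc)
    convert this using 1
    funext n
    simp [hvA, smul_sub]
  have hsumE : HasSum (fun n => c n • Φ (vA n)) (Φ vG) := by
    have h := Φ.hasSum hsumpi
    have heq : (fun n => Φ (c n • vA n)) = fun n => c n • Φ (vA n) := by
      funext n; exact _root_.map_smul Φ (c n) (vA n)
    rwa [heq] at h
  -- atom norms are at most 4
  have hAnorm : ∀ n, ‖Φ (vA n)‖ ≤ 4 := by
    intro n
    rw [hΦnorm]
    have h1 : ∑ k : Fin K, ‖vA n k‖ ^ p ≤ 4 ^ p := (hA n).variation_le hp ht h0 hl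
    have h2 : (∑ k : Fin K, ‖vA n k‖ ^ p) ^ (1/p) ≤ (4 ^ p) ^ (1/p) := by
      apply Real.rpow_le_rpow _ h1 (by positivity)
      exact Finset.sum_nonneg fun _ _ => Real.rpow_nonneg (norm_nonneg _) p
    calc (∑ k : Fin K, ‖vA n k‖ ^ p) ^ (1/p) ≤ ((4:ℝ) ^ p) ^ (1/p) := h2
    _ = 4 := by
        rw [← Real.rpow_mul (by norm_num), mul_one_div_cancel (ne_of_gt hp0), Real.rpow_one]
  have hsummable : Summable fun n => ‖c n • Φ (vA n)‖ := by
    apply Summable.of_nonneg_of_le (fun n => norm_nonneg _) _ (hc.mul_right 4)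
    intro n
    rw [norm_smul]
    exact mul_le_mul_of_nonneg_left (hAnorm n) (norm_nonneg _)
  have hkey : ‖Φ vG‖ ≤ 4 * ∑' n, ‖c n‖ := by
    calc ‖Φ vG‖ = ‖∑' n, c n • Φ (vA n)‖ := by rw [hsumE.tsum_eq]
    _ ≤ ∑' n, ‖c n • Φ (vA n)‖ := norm_tsum_le_tsum_norm hsummable
    _ ≤ ∑' n, ‖c n‖ * 4 := by
        apply Summable.tsum_le_tsum _ hsummable (hc.mul_right 4)
        intro n
        rw [norm_smul]
        exact mul_le_mul_of_nonneg_left (hAnorm n) (norm_nonneg _)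
    _ = 4 * ∑' n, ‖c n‖ := by rw [tsum_mul_right]; ring
  rw [hΦnorm] at hkey
  exact hkey

lemma partA {p a b : ℝ} (hp : 1 ≤ p) (u : ℝ → H) (hU : Unorm p a b u < ⊤) :
    Vnorm p a b u ≤ ENNReal.ofReal 4 * Unorm p a b u := by
  apply ENNReal.le_of_forall_pos_le_add
  intro ε hε hfin
  have h4 : ENNReal.ofReal 4 = (4 : ℝ≥0∞) := by
    rw [ENNReal.ofReal_ofNat]
  set δ : ℝ≥0∞ := (ε : ℝ≥0∞) / 4 with hδ
  have hδ0 : δ ≠ 0 := by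
    apply ne_of_gt
    apply ENNReal.div_pos (by exact_mod_cast hε.ne') (by norm_num)
  have hUlt : Unorm p a b u < Unorm p a b u + δ := ENNReal.lt_add_right hU.ne hδ0
  rw [Unorm] at hUlt
  rw [iInf_lt_iff] at hUlt
  obtain ⟨c, hc⟩ := hUlt
  rw [iInf_lt_iff] at hc
  obtain ⟨A, hA⟩ := hc
  rw [iInf_lt_iff] at hA
  obtain ⟨hsum, h1⟩ := hA
  rw [iInf_lt_iff] at h1
  obtain ⟨hatom, h2⟩ := h1
  rw [iInf_lt_iff] at h2
  obtain ⟨hrep, h3⟩ := h2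
  calc Vnorm p a b u ≤ ENNReal.ofReal (4 * ∑' n, ‖c n‖) := vnorm_le_of_rep hp c A hsum hatom hrep
  _ = ENNReal.ofReal 4 * ENNReal.ofReal (∑' n, ‖c n‖) := ENNReal.ofReal_mul (by norm_num)
  _ ≤ ENNReal.ofReal 4 * (Unorm p a b u + δ) := by
      apply mul_le_mul_right (le_of_lt h3)
  _ = ENNReal.ofReal 4 * Unorm p a b u + ENNReal.ofReal 4 * δ := by rw [mul_add]
  _ ≤ ENNReal.ofReal 4 * Unorm p a b u + ε := by
      apply add_le_add_right
      rw [h4, hδ]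
      exact ENNReal.mul_div_le

/-! ### Part (b) auxiliary lemmas -/

lemma vnorm_sum_bound {p a b M : ℝ} (hp : 1 ≤ p) {u : ℝ → H} (hM : 0 ≤ M)
    (hV : Vnorm p a b u ≤ ENNReal.ofReal M) {K : ℕ} {t : Fin (K+1) → ℝ}
    (ht : Monotone t) (h0 : t 0 = a) (hl : t (Fin.last K) = b) :
    (∑ k : Fin K, ‖(if t k.succ = b then 0 else u (t k.succ)) -
        (if t k.castSucc = b then 0 else u (t k.castSucc))‖ ^ p) ≤ M ^ p := by
  have hp0 : (0:ℝ) < p := lt_of_lt_of_le zero_lt_one hp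
  set S := ∑ k : Fin K, ‖(if t k.succ = b then 0 else u (t k.succ)) -
        (if t k.castSucc = b then 0 else u (t k.castSucc))‖ ^ p with hS
  have hS0 : 0 ≤ S := Finset.sum_nonneg fun _ _ => Real.rpow_nonneg (norm_nonneg _) _
  have h1 : ENNReal.ofReal (S ^ (1/p)) ≤ Vnorm p a b u := by
    rw [Vnorm]
    exact le_iSup_of_le K (le_iSup_of_le t (le_iSup_of_le ht (le_iSup_of_le h0
      (le_iSup_of_le hl le_rfl))))
  have h2 : S ^ (1/p) ≤ M := (ENNReal.ofReal_le_ofReal_iff hM).mp (le_trans h1 hV)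
  calc S = (S ^ (1/p)) ^ p := by
        rw [← Real.rpow_mul hS0, one_div_mul_cancel (ne_of_gt hp0), Real.rpow_one]
  _ ≤ M ^ p := Real.rpow_le_rpow (Real.rpow_nonneg hS0 _) h2 (le_of_lt hp0)

lemma norm_apply_le {p a b M : ℝ} (hp : 1 ≤ p) {u : ℝ → H} (hM : 0 ≤ M) (hab : a < b)
    (hbd : ∀ (K : ℕ) (t : Fin (K+1) → ℝ), Monotone t → t 0 = a → t (Fin.last K) = b →
      (∑ k : Fin K, ‖(if t k.succ = b then 0 else u (t k.succ)) -
          (if t k.castSucc = b then 0 else u (t k.castSucc))‖ ^ p) ≤ M ^ p)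
    (hua : u a = 0) {x : ℝ} (hax : a ≤ x) (hxb : x < b) : ‖u x‖ ≤ M := by
  have hp0 : (0:ℝ) < p := lt_of_lt_of_le zero_lt_one hp
  set t : Fin 3 → ℝ := ![a, x, b] with htdef
  have ht : Monotone t := by
    rw [Fin.monotone_iff_le_succ]
    intro i
    fin_cases i
    · simpa [htdef] using hax
    · simpa [htdef] using le_of_lt hxb
  have h0 : t 0 = a := rfl
  have hl : t (Fin.last 2) = b := rfl
  have hsum := hbd 2 t ht h0 hl
  have h00 : ‖(if t (0:Fin 2).succ = b then (0:H) else u (t (0:Fin 2).succ)) -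
      (if t (0:Fin 2).castSucc = b then 0 else u (t (0:Fin 2).castSucc))‖ ^ p = ‖u x‖ ^ p := by
    have e1 : t (0:Fin 2).succ = x := rfl
    have e2 : t (0:Fin 2).castSucc = a := rfl
    rw [e1, e2, if_neg (ne_of_lt hxb), if_neg (ne_of_lt hab), hua, sub_zero]
  have hterm := Finset.single_le_sum
    (f := fun k : Fin 2 => ‖(if t k.succ = b then (0:H) else u (t k.succ)) -
      (if t k.castSucc = b then 0 else u (t k.castSucc))‖ ^ p)
    (fun i _ => Real.rpow_nonneg (norm_nonneg _) _) (Finset.mem_univ (0:Fin 2))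
  have hle : ‖u x‖ ^ p ≤ M ^ p := by
    refine le_trans ?_ hsum
    rw [← h00]
    exact hterm
  by_contra h
  push_neg at h
  exact absurd hle (not_le.mpr (Real.rpow_lt_rpow hM h hp0))

lemma stopping {p a b M : ℝ} (hp : 1 ≤ p) (hab : a < b) (hM : 0 ≤ M) {u : ℝ → H}
    (hbd : ∀ (K : ℕ) (t : Fin (K+1) → ℝ), Monotone t → t 0 = a → t (Fin.last K) = b →
      (∑ k : Fin K, ‖(if t k.succ = b then 0 else u (t k.succ)) -
          (if t k.castSucc = b then 0 else u (t k.castSucc))‖ ^ p) ≤ M ^ p)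
    (hrc : ∀ x ∈ Set.Ico a b, Filter.Tendsto u (nhdsWithin x (Set.Ici x)) (nhds (u x)))
    {ε : ℝ} (hε : 0 < ε) :
    ∃ τ : ℕ → ℝ, Monotone τ ∧ τ 0 = a ∧ (∀ k, a ≤ τ k ∧ τ k ≤ b) ∧
      τ (⌈(M / ε) ^ p⌉₊ + 1) = b ∧
      (∀ k x, τ k ≤ x → x < τ (k+1) → ‖u x - u (τ k)‖ ≤ ε) := by
  classical
  have hp0 : (0:ℝ) < p := lt_of_lt_of_le zero_lt_one hp
  set g : ℝ → ℝ := fun y => if y = b then b else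
    sInf ({x | y < x ∧ x < b ∧ ε < ‖u x - u y‖} ∪ {b}) with hg
  set τ : ℕ → ℝ := fun k => Nat.rec a (fun _ prev => g prev) k with hτ
  have hτ0 : τ 0 = a := rfl
  have hτs : ∀ k, τ (k+1) = g (τ k) := fun k => rfl
  have hgb : g b = b := by rw [hg]; simp
  have hgne : ∀ y, y ≠ b → g y = sInf ({x | y < x ∧ x < b ∧ ε < ‖u x - u y‖} ∪ {b}) := by
    intro y hy
    simp only [hg]
    rw [if_neg hy]
  have hbdd : ∀ y, y ≤ b → BddBelow ({x | y < x ∧ x < b ∧ ε < ‖u x - u y‖} ∪ {b}) := by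
    intro y hyb
    refine ⟨y, ?_⟩
    rintro z (⟨h1, -, -⟩ | rfl)
    · exact le_of_lt h1
    · exact hyb
  have hg1 : ∀ y, a ≤ y → y ≤ b → y ≤ g y ∧ g y ≤ b := by
    intro y hay hyb
    by_cases hyb' : y = b
    · rw [hyb', hgb]; exact ⟨le_refl b, le_refl b⟩
    · rw [hgne y hyb']
      constructor
      · apply le_csInf ⟨b, Or.inr rfl⟩
        rintro x (⟨h1, -, -⟩ | rfl)
        · exact le_of_lt h1
        · exact hyb
      · exact csInf_le (hbdd y hyb) (Or.inr rfl)
  have hinv : ∀ k, a ≤ τ k ∧ τ k ≤ b := by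
    intro k
    induction k with
    | zero => exact ⟨le_refl a, le_of_lt hab⟩
    | succ k ih =>
        rw [hτs]
        have := hg1 (τ k) ih.1 ih.2
        exact ⟨ih.1.trans this.1, this.2⟩
  have hmono' : ∀ k, τ k ≤ τ (k+1) := by
    intro k
    rw [hτs]
    exact (hg1 (τ k) (hinv k).1 (hinv k).2).1
  have hmono : Monotone τ := monotone_nat_of_le_succ hmono'
  have habsorb : ∀ k, τ k = b → τ (k+1) = b := by
    intro k hk; rw [hτs, hk, hgb]
  have hgap : ∀ k x, τ k ≤ x → x < τ (k+1) → ‖u x - u (τ k)‖ ≤ ε := by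
    intro k x h1 h2
    by_cases hkb : τ k = b
    · exfalso
      rw [habsorb k hkb, ← hkb] at h2
      exact absurd (lt_of_le_of_lt h1 h2) (lt_irrefl _)
    rcases eq_or_lt_of_le h1 with heq | h1'
    · rw [← heq, sub_self, norm_zero]; exact le_of_lt hε
    · rw [hτs, hgne _ hkb] at h2
      by_contra hcon
      push_neg at hcon
      have hxb : x < b :=
        lt_of_lt_of_le h2 (csInf_le (hbdd (τ k) (hinv k).2) (Or.inr rfl))
      have hmem : x ∈ {x | τ k < x ∧ x < b ∧ ε < ‖u x - u (τ k)‖} ∪ {b} :=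
        Or.inl ⟨h1', hxb, hcon⟩
      have hle := csInf_le (hbdd (τ k) (hinv k).2) hmem
      exact absurd (lt_of_lt_of_le h2 hle) (lt_irrefl _)
  have hstrict : ∀ k, τ k < b → τ k < τ (k+1) := by
    intro k hkb
    have hrck := hrc (τ k) ⟨(hinv k).1, hkb⟩
    rw [Metric.tendsto_nhdsWithin_nhds] at hrck
    obtain ⟨δ, hδ0, hδ⟩ := hrck ε hε
    rw [hτs, hgne _ (ne_of_lt hkb)]
    have hlb : ∀ z ∈ {x | τ k < x ∧ x < b ∧ ε < ‖u x - u (τ k)‖} ∪ {b}, min (τ k + δ) b ≤ z := by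
      rintro z (⟨hz1, hz2, hz3⟩ | rfl)
      · rcases lt_or_ge z (τ k + δ) with h | h
        · exfalso
          have hd : dist z (τ k) < δ := by
            rw [Real.dist_eq, abs_of_pos (sub_pos.mpr hz1)]; linarith
          have := hδ (Set.mem_Ici.mpr (le_of_lt hz1)) hd
          rw [dist_eq_norm] at this
          exact absurd hz3 (not_lt.mpr (le_of_lt this))
        · exact le_trans (min_le_left _ _) h
      · exact min_le_right _ _
    have hinf := le_csInf ⟨b, Or.inr rfl⟩ hlb
    exact lt_of_lt_of_le (lt_min (by linarith) hkb) hinf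
  have hjump : ∀ k, τ (k+1) ≠ b → ε ≤ ‖u (τ (k+1)) - u (τ k)‖ := by
    intro k hne
    have hkb : τ k ≠ b := fun h => hne (habsorb k h)
    set S : Set ℝ := {x | τ k < x ∧ x < b ∧ ε < ‖u x - u (τ k)‖} with hSdef
    have hbddk : BddBelow (S ∪ {b}) := hbdd (τ k) (hinv k).2
    have hτ1 : τ (k+1) = sInf (S ∪ {b}) := by rw [hτs, hgne _ hkb]
    have hτ1b : τ (k+1) < b := lt_of_le_of_ne (hinv (k+1)).2 hne
    have hcl : τ (k+1) ∈ closure (S ∪ {b}) := by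
      rw [hτ1]; exact csInf_mem_closure ⟨b, Or.inr rfl⟩ hbddk
    rw [closure_union, closure_singleton] at hcl
    have hclS : τ (k+1) ∈ closure S := by
      rcases hcl with h | h
      · exact h
      · exact absurd (Set.mem_singleton_iff.mp h) hne
    have hSIci : S ⊆ Set.Ici (τ (k+1)) := by
      intro z hz
      rw [hτ1]
      exact csInf_le hbddk (Or.inl hz)
    haveI hNB : (nhdsWithin (τ (k+1)) S).NeBot := mem_closure_iff_nhdsWithin_neBot.mp hclS
    have htd : Filter.Tendsto u (nhdsWithin (τ (k+1)) S) (nhds (u (τ (k+1)))) :=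
      Filter.Tendsto.mono_left (hrc (τ (k+1)) ⟨(hinv (k+1)).1, hτ1b⟩) (nhdsWithin_mono _ hSIci)
    have htd2 : Filter.Tendsto (fun x => ‖u x - u (τ k)‖) (nhdsWithin (τ (k+1)) S)
        (nhds (‖u (τ (k+1)) - u (τ k)‖)) := (htd.sub tendsto_const_nhds).norm
    apply ge_of_tendsto htd2
    filter_upwards [self_mem_nhdsWithin] with z hz
    exact le_of_lt hz.2.2
  set N : ℕ := ⌈(M / ε) ^ p⌉₊ + 1 with hN
  have hterm : τ N = b := by
    by_contra hNb
    have hup : ∀ m k, k ≤ m → τ k = b → τ m = b := by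
      intro m
      induction m with
      | zero => intro k hk hkb; rwa [Nat.le_zero.mp hk] at hkb
      | succ m ih =>
          intro k hk hkb
          rcases eq_or_lt_of_le hk with rfl | h
          · exact hkb
          · exact habsorb m (ih k (Nat.lt_succ_iff.mp h) hkb)
    have hall : ∀ k, k ≤ N → τ k ≠ b := fun k hk hkb => hNb (hup N k hk hkb)
    have hlt : ∀ k, k ≤ N → τ k < b := fun k hk => lt_of_le_of_ne (hinv k).2 (hall k hk)
    have hjumps : ∀ k, k < N → ε ≤ ‖u (τ (k+1)) - u (τ k)‖ :=
      fun k hk => hjump k (hall (k+1) hk)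
    set t : Fin (N+2) → ℝ := fun j => if (j:ℕ) = N+1 then b else τ (j:ℕ) with htdef
    have htm : Monotone t := by
      intro i j hij
      have hij' : (i:ℕ) ≤ (j:ℕ) := hij
      by_cases hi : (i:ℕ) = N+1
      · have hj : (j:ℕ) = N+1 := le_antisymm (Nat.lt_succ_iff.mp j.isLt) (hi ▸ hij')
        simp [htdef, hi, hj]
      · by_cases hjj : (j:ℕ) = N+1
        · simp only [htdef, if_neg hi, if_pos hjj]
          exact (hinv i).2
        · simp only [htdef, if_neg hi, if_neg hjj]
          exact hmono hij'
    have ht0' : t 0 = a := by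
      have h00 : ((0 : Fin (N+2)):ℕ) = 0 := rfl
      simp only [htdef, h00]
      rw [if_neg (by omega)]
      exact hτ0
    have htl' : t (Fin.last (N+1)) = b := by
      simp only [htdef]
      rw [if_pos (by simp [Fin.val_last])]
    have hsum := hbd (N+1) t htm ht0' htl'
    have hterm_ge : ∀ k : Fin (N+1), (k:ℕ) < N →
        ε ^ p ≤ ‖(if t k.succ = b then (0:H) else u (t k.succ)) -
          (if t k.castSucc = b then 0 else u (t k.castSucc))‖ ^ p := by
      intro k hk
      have e1 : t k.succ = τ ((k:ℕ)+1) := by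
        simp only [htdef, Fin.val_succ]
        rw [if_neg (by omega)]
      have e2 : t k.castSucc = τ (k:ℕ) := by
        simp only [htdef, Fin.coe_castSucc]
        rw [if_neg (by omega)]
      rw [e1, e2, if_neg (ne_of_lt (hlt ((k:ℕ)+1) (by omega))), if_neg (ne_of_lt (hlt (k:ℕ) (by omega)))]
      exact Real.rpow_le_rpow (le_of_lt hε) (hjumps (k:ℕ) hk) (le_of_lt hp0)
    have hsum_ge : ∑ k : Fin (N+1), (if (k:ℕ) < N then ε^p else 0) ≤
        ∑ k : Fin (N+1), ‖(if t k.succ = b then (0:H) else u (t k.succ)) -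
          (if t k.castSucc = b then 0 else u (t k.castSucc))‖ ^ p := by
      apply Finset.sum_le_sum
      intro k _
      by_cases hk : (k:ℕ) < N
      · rw [if_pos hk]; exact hterm_ge k hk
      · rw [if_neg hk]; exact Real.rpow_nonneg (norm_nonneg _) _
    have hcount : ∑ k : Fin (N+1), (if (k:ℕ) < N then ε^p else 0) = N * ε^p := by
      rw [Fin.sum_univ_eq_sum_range (fun i => if i < N then ε^p else 0) (N+1)]
      rw [Finset.sum_range_succ, if_neg (lt_irrefl N), add_zero]
      rw [Finset.sum_congr rfl (fun i hi => if_pos (Finset.mem_range.mp hi))]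
      rw [Finset.sum_const, Finset.card_range, nsmul_eq_mul]
    have hNle : (N:ℝ) * ε^p ≤ M^p := by
      rw [← hcount]; exact le_trans hsum_ge hsum
    have hεp : (0:ℝ) < ε^p := Real.rpow_pos_of_pos hε p
    have hNle2 : (N:ℝ) ≤ (M/ε)^p := by
      rw [Real.div_rpow hM (le_of_lt hε), le_div_iff₀ hεp]
      exact hNle
    have hN1 : ((M/ε)^p) + 1 ≤ (N:ℝ) := by
      have h1 : ((M/ε)^p) ≤ (⌈(M/ε)^p⌉₊ : ℝ) := Nat.le_ceil _
      rw [hN]; push_cast; linarith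
    linarith
  exact ⟨τ, hmono, hτ0, hinv, hterm, hgap⟩

/-- The largest point of `T` to the left of `x`. -/
noncomputable def anchor (T : Finset ℝ) (x : ℝ) : ℝ := sSup ((T : Set ℝ) ∩ Set.Iic x)

lemma anchor_mem {T : Finset ℝ} {a x : ℝ} (ha : a ∈ T) (hx : a ≤ x) :
    anchor T x ∈ T ∧ anchor T x ≤ x := by
  have hne : ((T : Set ℝ) ∩ Set.Iic x).Nonempty := ⟨a, ⟨by exact_mod_cast ha, hx⟩⟩
  have hfin : ((T : Set ℝ) ∩ Set.Iic x).Finite := T.finite_toSet.inter_of_left _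
  have hmem := hne.csSup_mem hfin
  exact ⟨by exact_mod_cast hmem.1, hmem.2⟩

lemma le_anchor {T : Finset ℝ} {y x : ℝ} (hy : y ∈ T) (hyx : y ≤ x) : y ≤ anchor T x :=
  le_csSup ((T.finite_toSet.inter_of_left _).bddAbove) ⟨by exact_mod_cast hy, hyx⟩

lemma anchor_congr {S : Finset ℝ} {x y : ℝ}
    (h : (S : Set ℝ) ∩ Set.Iic x = (S : Set ℝ) ∩ Set.Iic y) : anchor S x = anchor S y := by
  rw [anchor, anchor, h]

lemma finset_partition (T : Finset ℝ) (a b : ℝ) (ha : a ∈ T) (hb : b ∈ T)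
    (hT : ∀ y ∈ T, a ≤ y ∧ y ≤ b) :
    ∃ (K : ℕ) (t : Fin (K+1) → ℝ), Monotone t ∧ t 0 = a ∧ t (Fin.last K) = b ∧
      (∀ i, t i ∈ T) ∧ (∀ y ∈ T, ∃ i, t i = y) ∧
      (∀ i j, t i ≤ t j → i ≤ j) ∧ (K + 1 = T.card) := by
  have hpos : 0 < T.card := Finset.card_pos.mpr ⟨a, ha⟩
  obtain ⟨K, hK⟩ : ∃ K, T.card = K + 1 := ⟨T.card - 1, (Nat.succ_pred_eq_of_pos hpos).symm⟩
  set e := T.orderIsoOfFin hK with he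
  set t : Fin (K+1) → ℝ := fun i => (e i : ℝ) with htdef
  have hstrict : StrictMono t := by
    intro i j hij
    exact_mod_cast e.strictMono hij
  have hmono : Monotone t := hstrict.monotone
  have hmem : ∀ i, t i ∈ T := fun i => (e i).2
  have hsurj : ∀ y ∈ T, ∃ i, t i = y := by
    intro y hy
    refine ⟨e.symm ⟨y, hy⟩, ?_⟩
    rw [htdef]
    simp
  have hrefl : ∀ i j, t i ≤ t j → i ≤ j := by
    intro i j h
    by_contra hc
    push_neg at hc
    exact absurd (hstrict hc) (not_lt.mpr h)
  have h0 : t 0 = a := by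
    obtain ⟨i, hi⟩ := hsurj a ha
    have h1 : t 0 ≤ t i := hmono (Fin.zero_le i)
    have h2 : a ≤ t 0 := (hT _ (hmem 0)).1
    rw [hi] at h1
    linarith
  have hlst : t (Fin.last K) = b := by
    obtain ⟨i, hi⟩ := hsurj b hb
    have h1 : t i ≤ t (Fin.last K) := hmono (Fin.le_last i)
    have h2 : t (Fin.last K) ≤ b := (hT _ (hmem _)).2
    rw [hi] at h1
    linarith
  exact ⟨K, t, hmono, h0, hlst, hmem, hsurj, hrefl, hK.symm⟩

lemma anchor_cell {T : Finset ℝ} {a : ℝ} {K : ℕ} {t : Fin (K+1) → ℝ}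
    (hmono : Monotone t) (h0 : t 0 = a)
    (hmem : ∀ i, t i ∈ T) (hsurj : ∀ y ∈ T, ∃ i, t i = y) (hrefl : ∀ i j, t i ≤ t j → i ≤ j)
    {j : Fin K} {x : ℝ} (h1 : t j.castSucc ≤ x) (h2 : x < t j.succ) :
    anchor T x = t j.castSucc := by
  have haT : a ∈ T := h0 ▸ hmem 0
  have hax : a ≤ x := le_trans (h0 ▸ hmono (Fin.zero_le j.castSucc)) h1
  obtain ⟨hmemA, hleA⟩ := anchor_mem haT hax
  obtain ⟨i, hi⟩ := hsurj _ hmemA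
  apply le_antisymm
  · rw [← hi]
    apply hmono
    have hlt : t i < t j.succ := by rw [hi]; exact lt_of_le_of_lt hleA h2
    have hij : i < j.succ := by
      by_contra hc
      push_neg at hc
      exact absurd (hmono hc) (not_le.mpr hlt)
    exact Fin.le_castSucc_iff.mpr hij
  · exact le_anchor (hmem j.castSucc) h1

lemma anchor_subset_cell {S T : Finset ℝ} (hST : S ⊆ T) {K : ℕ} {t : Fin (K+1) → ℝ}
    (hmono : Monotone t)
    (hsurj : ∀ y ∈ T, ∃ i, t i = y)
    {j : Fin K} {x : ℝ} (h1 : t j.castSucc ≤ x) (h2 : x < t j.succ) :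
    anchor S x = anchor S (t j.castSucc) := by
  apply anchor_congr
  ext z
  simp only [Set.mem_inter_iff, Set.mem_Iic, Finset.mem_coe]
  constructor
  · rintro ⟨hzS, hzx⟩
    refine ⟨hzS, ?_⟩
    obtain ⟨i, hi⟩ := hsurj z (hST hzS)
    rw [← hi]
    apply hmono
    have hlt : t i < t j.succ := by rw [hi]; exact lt_of_le_of_lt hzx h2
    have hij : i < j.succ := by
      by_contra hc
      push_neg at hc
      exact absurd (hmono hc) (not_le.mpr hlt)
    exact Fin.le_castSucc_iff.mpr hij
  · rintro ⟨hzS, hz⟩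
    exact ⟨hzS, le_trans hz h1⟩

lemma step_sum_eval {a b : ℝ} {K : ℕ} {t : Fin (K+1) → ℝ} (hmono : Monotone t)
    (h0 : t 0 = a) (hl : t (Fin.last K) = b) (g : ℝ → H)
    (hg : ∀ (j : Fin K) (y : ℝ), t j.castSucc ≤ y → y < t j.succ → g y = g (t j.castSucc))
    {x : ℝ} (hax : a ≤ x) (hxb : x < b) :
    (∑ j : Fin K, if t j.castSucc ≤ x ∧ x < t j.succ then g (t j.castSucc) else 0) = g x := by
  obtain ⟨j, h1, h2⟩ := exists_cell hmono h0 hl hax hxb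
  rw [sum_ite_cell hmono h1 h2]
  exact (hg j x h1 h2).symm

lemma exists_atom_of_step {q a b : ℝ} (hq : 0 < q) {K : ℕ} {t : Fin (K+1) → ℝ}
    (hmono : Monotone t) (h0 : t 0 = a) (hl : t (Fin.last K) = b) (φ : Fin K → H) :
    ∃ A : ℝ → H, IsAtom q a b A ∧ ∀ x : ℝ,
      (((∑ j : Fin K, ‖φ j‖ ^ q) ^ (1/q) : ℝ) : ℂ) • A x
        = ∑ j : Fin K, if t j.castSucc ≤ x ∧ x < t j.succ then φ j else 0 := by
  set r : ℝ := (∑ j : Fin K, ‖φ j‖ ^ q) ^ (1/q) with hr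
  have hsum0 : 0 ≤ ∑ j : Fin K, ‖φ j‖ ^ q :=
    Finset.sum_nonneg fun _ _ => Real.rpow_nonneg (norm_nonneg _) _
  have hr0 : 0 ≤ r := Real.rpow_nonneg hsum0 _
  have hrq : r ^ q = ∑ j : Fin K, ‖φ j‖ ^ q := by
    rw [hr, ← Real.rpow_mul hsum0, one_div_mul_cancel (ne_of_gt hq), Real.rpow_one]
  by_cases hrz : r = 0
  · have hzero : ∀ j, φ j = 0 := by
      intro j
      have hS : (∑ j : Fin K, ‖φ j‖ ^ q) = 0 := by
        rw [← hrq, hrz, Real.zero_rpow (ne_of_gt hq)]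
      have hnn : ∀ i ∈ Finset.univ, (0:ℝ) ≤ ‖φ i‖ ^ q :=
        fun i _ => Real.rpow_nonneg (norm_nonneg _) _
      have hj : ‖φ j‖ ^ q = 0 :=
        le_antisymm (hS ▸ Finset.single_le_sum hnn (Finset.mem_univ j)) (hnn j (Finset.mem_univ j))
      have hn : ‖φ j‖ = 0 := by
        by_contra hc
        have hpos : 0 < ‖φ j‖ := lt_of_le_of_ne (norm_nonneg _) (Ne.symm hc)
        exact absurd hj (ne_of_gt (Real.rpow_pos_of_pos hpos q))
      exact norm_eq_zero.mp hn
    refine ⟨fun _ => 0, ⟨K, t, fun _ => 0, hmono, h0, hl, ?_, ?_⟩, ?_⟩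
    · simp [Real.zero_rpow (ne_of_gt hq)]
    · intro x; simp
    · intro x
      rw [smul_zero]
      symm
      apply Finset.sum_eq_zero
      intro j _
      rw [hzero j]
      simp
  · have hrpos : 0 < r := lt_of_le_of_ne hr0 (Ne.symm hrz)
    set ψ : Fin K → H := fun j => ((r : ℂ))⁻¹ • φ j with hψ
    refine ⟨fun x => ∑ j : Fin K, if t j.castSucc ≤ x ∧ x < t j.succ then ψ j else 0,
      ⟨K, t, ψ, hmono, h0, hl, ?_, fun x => rfl⟩, ?_⟩
    · have hψn : ∀ j, ‖ψ j‖ ^ q = r⁻¹ ^ q * ‖φ j‖ ^ q := by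
        intro j
        rw [hψ]
        simp only [norm_smul]
        rw [Real.mul_rpow (norm_nonneg _) (norm_nonneg _)]
        congr 2
        rw [norm_inv, Complex.norm_real, Real.norm_eq_abs, abs_of_pos hrpos]
      rw [Finset.sum_congr rfl (fun j _ => hψn j), ← Finset.mul_sum, ← hrq,
        ← Real.mul_rpow (inv_nonneg.mpr hr0) hr0, inv_mul_cancel₀ hrz, Real.one_rpow]
    · intro x
      rw [Finset.smul_sum]
      apply Finset.sum_congr rfl
      intro j _
      rw [smul_ite, smul_zero]
      congr 1
      rw [hψ, smul_smul, mul_inv_cancel₀ (by exact_mod_cast hrz), one_smul]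

lemma geom_sum_le {X : ℝ} (hX : 2 ≤ X) : ∀ n : ℕ, ∑ m ∈ Finset.range (n+1), X ^ m ≤ 2 * X ^ n := by
  intro n
  induction n with
  | zero => simp
  | succ n ih =>
      rw [Finset.sum_range_succ]
      have hX0 : (0:ℝ) ≤ X ^ n := pow_nonneg (by linarith) n
      have h2 : 2 * X ^ n ≤ X ^ (n+1) := by
        rw [pow_succ]
        nlinarith
      have := Finset.sum_range_succ (fun m => X ^ m) n
      calc ∑ m ∈ Finset.range (n+1), X ^ m + X ^ (n+1) ≤ 2 * X ^ n + X ^ (n+1) := by linarith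
      _ ≤ X ^ (n+1) + X ^ (n+1) := by linarith
      _ = 2 * X ^ (n+1) := by ring

lemma partB [CompleteSpace H] {p q a b : ℝ} (hp : 1 ≤ p) (hpq : p < q) (hab : a < b) :
    ∃ C : ℝ, 0 ≤ C ∧ ∀ u : ℝ → H, Vnorm p a b u < ⊤ →
      (∀ t ∈ Set.Ico a b, Filter.Tendsto u (nhdsWithin t (Set.Ici t)) (nhds (u t))) →
      u a = 0 →
      Unorm q a b u ≤ ENNReal.ofReal C * Vnorm p a b u := by
  classical
  have hp0 : (0:ℝ) < p := lt_of_lt_of_le zero_lt_one hp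
  have hq : 1 ≤ q := hp.trans hpq.le
  have hq0 : (0:ℝ) < q := lt_of_lt_of_le zero_lt_one hq
  set X : ℝ := 2 ^ p with hX
  have hX2 : 2 ≤ X := by
    rw [hX]
    calc (2:ℝ) = 2 ^ (1:ℝ) := (Real.rpow_one 2).symm
    _ ≤ 2 ^ p := Real.rpow_le_rpow_of_exponent_le one_le_two hp
  have hX0 : (0:ℝ) < X := by linarith
  set θ : ℝ := 2 ^ (p/q - 1) with hθ
  have hθ0 : (0:ℝ) < θ := Real.rpow_pos_of_pos two_pos _
  have hθ1 : θ < 1 := by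
    rw [hθ]
    have hlt : p/q - 1 < 0 := by
      rw [sub_neg, div_lt_one hq0]
      exact hpq
    calc (2:ℝ) ^ (p/q-1) < 2 ^ (0:ℝ) := Real.rpow_lt_rpow_of_exponent_lt one_lt_two hlt
    _ = 1 := Real.rpow_zero 2
  set C0 : ℝ := 3 * (8 * X) ^ (1/q) with hC0
  have hC00 : 0 ≤ C0 := by positivity
  set C : ℝ := 8 + C0 * (1 - θ)⁻¹ with hC
  have hinv0 : 0 ≤ (1 - θ)⁻¹ := inv_nonneg.mpr (by linarith)
  have hCnn : 0 ≤ C := by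
    rw [hC]
    have := mul_nonneg hC00 hinv0
    linarith
  refine ⟨C, hCnn, ?_⟩
  intro u hV hrc hua
  set M : ℝ := (Vnorm p a b u).toReal with hMdef
  have hM0 : 0 ≤ M := ENNReal.toReal_nonneg
  have hVM : Vnorm p a b u = ENNReal.ofReal M := (ENNReal.ofReal_toReal hV.ne).symm
  have hbd : ∀ (K : ℕ) (t : Fin (K+1) → ℝ), Monotone t → t 0 = a → t (Fin.last K) = b →
      (∑ k : Fin K, ‖(if t k.succ = b then 0 else u (t k.succ)) -
          (if t k.castSucc = b then 0 else u (t k.castSucc))‖ ^ p) ≤ M ^ p :=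
    fun K t htm h0 hl => vnorm_sum_bound hp hM0 hVM.le htm h0 hl
  by_cases hMz : M = 0
  · -- the function vanishes on `[a,b)`; represent by the zero series
    have hu0 : ∀ x, a ≤ x → x < b → u x = 0 := by
      intro x h1 h2
      have := norm_apply_le hp hM0 hab hbd hua h1 h2
      rw [hMz] at this
      exact norm_le_zero_iff.mp this
    have hatom : IsAtom q a b (fun _ : ℝ => (0:H)) := by
      refine ⟨1, ![a, b], fun _ => 0, ?_, rfl, rfl, ?_, ?_⟩
      · rw [Fin.monotone_iff_le_succ]
        intro i
        fin_cases i
        simpa using hab.le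
      · simp [Real.zero_rpow (ne_of_gt hq0)]
      · intro x; simp
    have hle : Unorm q a b u ≤ ENNReal.ofReal (∑' _ : ℕ, ‖(0:ℂ)‖) := by
      apply iInf_le_of_le (fun _ => 0)
      apply iInf_le_of_le (fun _ => (fun _ => 0))
      apply iInf_le_of_le (by simpa using summable_zero)
      apply iInf_le_of_le (fun _ => hatom)
      apply iInf_le _ ?_
      rintro x ⟨h1, h2⟩
      rw [hu0 x h1 h2]
      simpa using hasSum_zero
    refine le_trans hle ?_
    simp
  · have hMpos : 0 < M := lt_of_le_of_ne hM0 (Ne.symm hMz)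
    -- stopping times at every scale
    have hstop : ∀ n : ℕ, ∃ τ : ℕ → ℝ, Monotone τ ∧ τ 0 = a ∧ (∀ k, a ≤ τ k ∧ τ k ≤ b) ∧
        τ (⌈(M / (M / 2 ^ n)) ^ p⌉₊ + 1) = b ∧
        (∀ k x, τ k ≤ x → x < τ (k+1) → ‖u x - u (τ k)‖ ≤ M / 2 ^ n) :=
      fun n => stopping hp hab hM0 hbd hrc (by positivity)
    choose τ hτm hτ0 hτmem hτb hτgap using hstop
    set N : ℕ → ℕ := fun n => ⌈(M / (M / 2 ^ n)) ^ p⌉₊ + 1 with hN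
    have hXn : ∀ n : ℕ, ((2:ℝ)^n) ^ p = X ^ n := by
      intro n
      rw [hX, ← Real.rpow_natCast (2:ℝ) n, ← Real.rpow_mul (by norm_num), mul_comm,
        Real.rpow_mul (by norm_num), Real.rpow_natCast]
    have hXn1 : ∀ n : ℕ, (1:ℝ) ≤ X ^ n := fun n => one_le_pow₀ (by linarith : (1:ℝ) ≤ X)
    have hNbound : ∀ m, (N m : ℝ) + 1 ≤ 4 * X ^ m := by
      intro m
      have hMdiv : M / (M / 2 ^ m) = 2 ^ m := by
        rw [div_div_eq_mul_div, mul_comm M ((2:ℝ)^m), mul_div_assoc, div_self hMz, mul_one]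
      have hyX : (M / (M / 2 ^ m)) ^ p = X ^ m := by rw [hMdiv]; exact hXn m
      have hceil : (⌈(M / (M / 2 ^ m)) ^ p⌉₊ : ℝ) < (M / (M / 2 ^ m)) ^ p + 1 :=
        Nat.ceil_lt_add_one (by rw [hyX]; linarith [hXn1 m])
      have hNm : (N m : ℝ) = (⌈(M / (M / 2 ^ m)) ^ p⌉₊ : ℝ) + 1 := by
        rw [hN]; push_cast; ring
      rw [hNm, hyX] at *
      linarith [hXn1 m]
    -- the nested grids
    set P : ℕ → Finset ℝ := fun n => (Finset.range (N n + 1)).image (τ n) with hP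
    set Q : ℕ → Finset ℝ := fun n => (Finset.range (n+1)).biUnion P with hQ
    have haQ : ∀ n, a ∈ Q n := by
      intro n
      apply Finset.mem_biUnion.mpr
      exact ⟨0, by simp, Finset.mem_image.mpr ⟨0, by simp, hτ0 0⟩⟩
    have hbQ : ∀ n, b ∈ Q n := by
      intro n
      apply Finset.mem_biUnion.mpr
      exact ⟨0, by simp, Finset.mem_image.mpr ⟨N 0, by simp [hN], hτb 0⟩⟩
    have hQIcc : ∀ n, ∀ y ∈ Q n, a ≤ y ∧ y ≤ b := by
      intro n y hy
      obtain ⟨m, -, hy2⟩ := Finset.mem_biUnion.mp hy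
      obtain ⟨k, -, rfl⟩ := Finset.mem_image.mp hy2
      exact hτmem m k
    have hQmono : ∀ n, Q n ⊆ Q (n+1) := by
      intro n
      apply Finset.biUnion_subset_biUnion_of_subset_left
      apply Finset.range_subset_range.mpr
      omega
    have hPQ : ∀ n, P n ⊆ Q n :=
      fun n => Finset.subset_biUnion_of_mem P (by simp : n ∈ Finset.range (n+1))
    -- partitions of the grids
    have hpart : ∀ n, ∃ (K : ℕ) (t : Fin (K+1) → ℝ), Monotone t ∧ t 0 = a ∧ t (Fin.last K) = b ∧
        (∀ i, t i ∈ Q n) ∧ (∀ y ∈ Q n, ∃ i, t i = y) ∧ (∀ i j, t i ≤ t j → i ≤ j) ∧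
        (K + 1 = (Q n).card) :=
      fun n => finset_partition (Q n) a b (haQ n) (hbQ n) (hQIcc n)
    choose K t htm ht0 htl htmem htsurj htrefl htcard using hpart
    have hstrictcell : ∀ n (j : Fin (K n)), t n j.castSucc < t n j.succ := by
      intro n j
      rcases lt_or_ge (t n j.castSucc) (t n j.succ) with h | h
      · exact h
      · exact absurd (htrefl n _ _ h) (not_le.mpr (Fin.castSucc_lt_succ (i := j)))
    have hcell_mem : ∀ n (j : Fin (K n)), a ≤ t n j.castSucc ∧ t n j.castSucc < b := by
      intro n j
      constructor
      · rw [← ht0 n]; exact htm n (Fin.zero_le _)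
      · exact lt_of_lt_of_le (hstrictcell n j) (by rw [← htl n]; exact htm n (Fin.le_last _))
    -- the approximating step functions
    set w : ℕ → ℝ → H := fun n x => u (anchor (Q n) x) with hw
    have hdev : ∀ n x, a ≤ x → x < b → ‖w n x - u x‖ ≤ 2 * (M / 2 ^ n) := by
      intro n x hax hxb
      set k := Nat.findGreatest (fun k => τ n k ≤ x) (N n) with hk
      have hk1 : τ n k ≤ x := Nat.findGreatest_spec (P := fun k => τ n k ≤ x) (Nat.zero_le _) (show τ n 0 ≤ x by rw [hτ0 n]; exact hax)
      have hkN : k ≤ N n := Nat.findGreatest_le _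
      have hkltN : k < N n := by
        rcases lt_or_eq_of_le hkN with h | h
        · exact h
        · exfalso
          rw [h, hτb n] at hk1
          exact absurd (lt_of_le_of_lt hk1 hxb) (lt_irrefl _)
      have hk2 : x < τ n (k+1) := by
        by_contra hc
        push_neg at hc
        exact Nat.findGreatest_is_greatest (Nat.lt_succ_self k) (by omega) hc
      have hτnk : τ n k ∈ Q n :=
        hPQ n (Finset.mem_image.mpr ⟨k, Finset.mem_range.mpr (by omega), rfl⟩)
      have hanc1 := anchor_mem (haQ n) hax
      have hanc2 : τ n k ≤ anchor (Q n) x := le_anchor hτnk hk1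
      have h3 : ‖u (anchor (Q n) x) - u (τ n k)‖ ≤ M / 2 ^ n :=
        hτgap n k _ hanc2 (lt_of_le_of_lt hanc1.2 hk2)
      have h4 : ‖u x - u (τ n k)‖ ≤ M / 2 ^ n := hτgap n k x hk1 hk2
      calc ‖w n x - u x‖
          = ‖(u (anchor (Q n) x) - u (τ n k)) - (u x - u (τ n k))‖ := by
            rw [hw, sub_sub_sub_cancel_right]
      _ ≤ ‖u (anchor (Q n) x) - u (τ n k)‖ + ‖u x - u (τ n k)‖ := norm_sub_le _ _
      _ ≤ M / 2 ^ n + M / 2 ^ n := add_le_add h3 h4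
      _ = 2 * (M / 2 ^ n) := by ring
    have hwcell : ∀ n (j : Fin (K n)) (y : ℝ), t n j.castSucc ≤ y → y < t n j.succ →
        w n y = u (t n j.castSucc) := by
      intro n j y h1 h2
      show u (anchor (Q n) y) = u (t n j.castSucc)
      rw [anchor_cell (htm n) (ht0 n) (htmem n) (htsurj n) (htrefl n) h1 h2]
    have hwsub : ∀ n (j : Fin (K (n+1))) (y : ℝ), t (n+1) j.castSucc ≤ y → y < t (n+1) j.succ →
        w n y = w n (t (n+1) j.castSucc) := by
      intro n j y h1 h2
      show u (anchor (Q n) y) = u (anchor (Q n) (t (n+1) j.castSucc))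
      rw [anchor_subset_cell (hQmono n) (htm (n+1)) (htsurj (n+1)) h1 h2]
    -- the atoms
    set φ0 : Fin (K 0) → H := fun j => u (t 0 j.castSucc) with hφ0
    set φd : (n : ℕ) → Fin (K (n+1)) → H :=
      fun n j => w (n+1) (t (n+1) j.castSucc) - w n (t (n+1) j.castSucc) with hφd
    set r0 : ℝ := (∑ j : Fin (K 0), ‖φ0 j‖ ^ q) ^ (1/q) with hr0
    set rd : ℕ → ℝ := fun n => (∑ j : Fin (K (n+1)), ‖φd n j‖ ^ q) ^ (1/q) with hrd
    have hr0nn : 0 ≤ r0 := Real.rpow_nonneg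
      (Finset.sum_nonneg fun _ _ => Real.rpow_nonneg (norm_nonneg _) _) _
    have hrdnn : ∀ n, 0 ≤ rd n := fun n => Real.rpow_nonneg
      (Finset.sum_nonneg fun _ _ => Real.rpow_nonneg (norm_nonneg _) _) _
    obtain ⟨A0, hA0atom, hA0⟩ := exists_atom_of_step hq0 (htm 0) (ht0 0) (htl 0) φ0
    have hAd' : ∀ n, ∃ A, IsAtom q a b A ∧ ∀ x : ℝ,
        ((rd n : ℝ) : ℂ) • A x = ∑ j : Fin (K (n+1)),
          if t (n+1) j.castSucc ≤ x ∧ x < t (n+1) j.succ then φd n j else 0 :=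
      fun n => exists_atom_of_step hq0 (htm (n+1)) (ht0 (n+1)) (htl (n+1)) (φd n)
    choose Ad hAdatom hAdval using hAd'
    set c : ℕ → ℂ := fun n => Nat.casesOn n ((r0 : ℝ) : ℂ) (fun m => ((rd m : ℝ) : ℂ)) with hcdef
    set A : ℕ → ℝ → H := fun n => Nat.casesOn n A0 Ad with hAdef
    -- evaluation of the partial steps
    have hφ0w : ∀ j, φ0 j = w 0 (t 0 j.castSucc) :=
      fun j => (hwcell 0 j _ le_rfl (hstrictcell 0 j)).symm
    have hstep0 : ∀ x, a ≤ x → x < b → c 0 • A 0 x = w 0 x := by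
      intro x hax hxb
      show ((r0 : ℝ) : ℂ) • A0 x = w 0 x
      rw [hA0 x]
      rw [Finset.sum_congr rfl (fun j _ => by rw [hφ0w j])]
      refine step_sum_eval (htm 0) (ht0 0) (htl 0) (w 0) ?_ hax hxb
      intro j y h1 h2
      rw [hwcell 0 j y h1 h2]
      exact (hwcell 0 j _ le_rfl (hstrictcell 0 j)).symm
    have hstepd : ∀ n x, a ≤ x → x < b → c (n+1) • A (n+1) x = w (n+1) x - w n x := by
      intro n x hax hxb
      show ((rd n : ℝ) : ℂ) • Ad n x = w (n+1) x - w n x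
      rw [hAdval n x]
      have hg : ∀ (j : Fin (K (n+1))) (y : ℝ), t (n+1) j.castSucc ≤ y → y < t (n+1) j.succ →
          (fun z => w (n+1) z - w n z) y = (fun z => w (n+1) z - w n z) (t (n+1) j.castSucc) := by
        intro j y h1 h2
        simp only
        rw [hwcell (n+1) j y h1 h2, hwsub n j y h1 h2,
          hwcell (n+1) j _ le_rfl (hstrictcell (n+1) j)]
      have heval := step_sum_eval (htm (n+1)) (ht0 (n+1)) (htl (n+1))
        (fun z => w (n+1) z - w n z) hg hax hxb
      exact heval
    -- bounds on the coefficients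
    have hφ0bound : ∀ j, ‖φ0 j‖ ≤ M := by
      intro j
      rw [hφ0]
      exact norm_apply_le hp hM0 hab hbd hua (hcell_mem 0 j).1 (hcell_mem 0 j).2
    have hφdbound : ∀ n j, ‖φd n j‖ ≤ 3 * (M / 2 ^ n) := by
      intro n j
      have hx := hcell_mem (n+1) j
      have h2n : ((2:ℝ) ^ n) ≠ 0 := by positivity
      calc ‖φd n j‖
          = ‖(w (n+1) (t (n+1) j.castSucc) - u (t (n+1) j.castSucc)) -
              (w n (t (n+1) j.castSucc) - u (t (n+1) j.castSucc))‖ := by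
            rw [hφd]; simp only; rw [sub_sub_sub_cancel_right]
      _ ≤ ‖w (n+1) (t (n+1) j.castSucc) - u (t (n+1) j.castSucc)‖ +
            ‖w n (t (n+1) j.castSucc) - u (t (n+1) j.castSucc)‖ := norm_sub_le _ _
      _ ≤ 2 * (M / 2 ^ (n+1)) + 2 * (M / 2 ^ n) :=
            add_le_add (hdev (n+1) _ hx.1 hx.2) (hdev n _ hx.1 hx.2)
      _ = 3 * (M / 2 ^ n) := by
            rw [pow_succ]
            field_simp
            ring
    have hKbound : ∀ n, (K n : ℝ) ≤ 8 * X ^ n := by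
      intro n
      have h1 : ((K n : ℝ)) + 1 = ((Q n).card : ℝ) := by exact_mod_cast htcard n
      have h2 : (Q n).card ≤ ∑ m ∈ Finset.range (n+1), (P m).card := Finset.card_biUnion_le
      have h3 : ∀ m, ((P m).card : ℝ) ≤ 4 * X ^ m := by
        intro m
        have hcle : (P m).card ≤ N m + 1 := by
          rw [hP]
          exact le_trans Finset.card_image_le (by rw [Finset.card_range])
        calc ((P m).card : ℝ) ≤ (N m : ℝ) + 1 := by exact_mod_cast hcle
        _ ≤ 4 * X ^ m := hNbound m
      have h4 : ((Q n).card : ℝ) ≤ ∑ m ∈ Finset.range (n+1), ((P m).card : ℝ) := by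
        exact_mod_cast h2
      calc (K n : ℝ) ≤ ((Q n).card : ℝ) := by linarith
      _ ≤ ∑ m ∈ Finset.range (n+1), ((P m).card : ℝ) := h4
      _ ≤ ∑ m ∈ Finset.range (n+1), 4 * X ^ m := Finset.sum_le_sum (fun m _ => h3 m)
      _ = 4 * ∑ m ∈ Finset.range (n+1), X ^ m := by rw [Finset.mul_sum]
      _ ≤ 4 * (2 * X ^ n) := by
            have := geom_sum_le hX2 n
            linarith
      _ = 8 * X ^ n := by ring
    -- `rd n ≤ C0 * M * θ^n`
    have hrd_bound : ∀ n, rd n ≤ C0 * M * θ ^ n := by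
      intro n
      have h3M0 : (0:ℝ) ≤ 3 * (M / 2 ^ n) := by positivity
      have hsum_le : ∑ j : Fin (K (n+1)), ‖φd n j‖ ^ q
          ≤ (K (n+1) : ℝ) * (3 * (M / 2 ^ n)) ^ q := by
        calc ∑ j : Fin (K (n+1)), ‖φd n j‖ ^ q
            ≤ ∑ _j : Fin (K (n+1)), (3 * (M / 2 ^ n)) ^ q :=
              Finset.sum_le_sum (fun j _ =>
                Real.rpow_le_rpow (norm_nonneg _) (hφdbound n j) (le_of_lt hq0))
        _ = (K (n+1) : ℝ) * (3 * (M / 2 ^ n)) ^ q := by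
              rw [Finset.sum_const, Finset.card_univ, Fintype.card_fin, nsmul_eq_mul]
      have hr2 : rd n ≤ ((8 * X ^ (n+1)) * (3 * (M / 2 ^ n)) ^ q) ^ (1/q) := by
        rw [hrd]
        apply Real.rpow_le_rpow
          (Finset.sum_nonneg fun _ _ => Real.rpow_nonneg (norm_nonneg _) _)
          (le_trans hsum_le (mul_le_mul_of_nonneg_right (hKbound (n+1))
            (Real.rpow_nonneg h3M0 q)))
          (by positivity)
      have he : ((8 * X ^ (n+1)) * (3 * (M / 2 ^ n)) ^ q) ^ (1/q)
          = (8 * X) ^ (1/q) * ((2:ℝ) ^ (p/q)) ^ n * (3 * (M / 2 ^ n)) := by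
        rw [Real.mul_rpow (by positivity) (Real.rpow_nonneg h3M0 q)]
        rw [← Real.rpow_mul h3M0, mul_one_div_cancel (ne_of_gt hq0), Real.rpow_one]
        congr 1
        rw [pow_succ, show 8 * (X ^ n * X) = (8 * X) * X ^ n by ring]
        rw [Real.mul_rpow (by positivity) (by positivity)]
        congr 1
        have hXnn : (X ^ n : ℝ) = 2 ^ ((n:ℝ) * p) := by
          rw [hX, ← Real.rpow_natCast ((2:ℝ) ^ p) n, ← Real.rpow_mul (by norm_num), mul_comm]
        rw [hXnn, ← Real.rpow_natCast ((2:ℝ) ^ (p/q)) n,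
          ← Real.rpow_mul (by norm_num), ← Real.rpow_mul (by norm_num)]
        congr 1
        field_simp
      have hθn : θ ^ n = ((2:ℝ) ^ (p/q)) ^ n / 2 ^ n := by
        rw [hθ, show p/q - 1 = p/q - (1:ℝ) from rfl, Real.rpow_sub two_pos, Real.rpow_one,
          div_pow]
      have hfin : (8 * X) ^ (1/q) * ((2:ℝ) ^ (p/q)) ^ n * (3 * (M / 2 ^ n))
          = C0 * M * θ ^ n := by
        rw [hθn, hC0]
        have h2n : ((2:ℝ) ^ n) ≠ 0 := by positivity
        field_simp
      rw [← hfin]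
      rw [he] at hr2
      exact hr2
    -- `r0 ≤ 8 * M`
    have hr0_bound : r0 ≤ 8 * M := by
      have hsum_le : ∑ j : Fin (K 0), ‖φ0 j‖ ^ q ≤ (K 0 : ℝ) * M ^ q := by
        calc ∑ j : Fin (K 0), ‖φ0 j‖ ^ q ≤ ∑ _j : Fin (K 0), M ^ q :=
              Finset.sum_le_sum (fun j _ =>
                Real.rpow_le_rpow (norm_nonneg _) (hφ0bound j) (le_of_lt hq0))
        _ = (K 0 : ℝ) * M ^ q := by
              rw [Finset.sum_const, Finset.card_univ, Fintype.card_fin, nsmul_eq_mul]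
      have hK0 : (K 0 : ℝ) ≤ 8 := by
        have := hKbound 0
        simpa using this
      have h8q : ((8:ℝ) * M ^ q) ^ (1/q) = 8 ^ (1/q) * M := by
        rw [Real.mul_rpow (by norm_num) (Real.rpow_nonneg hM0 q)]
        rw [← Real.rpow_mul hM0, mul_one_div_cancel (ne_of_gt hq0), Real.rpow_one]
      calc r0 ≤ ((8:ℝ) * M ^ q) ^ (1/q) := by
            rw [hr0]
            apply Real.rpow_le_rpow
              (Finset.sum_nonneg fun _ _ => Real.rpow_nonneg (norm_nonneg _) _)
              (le_trans hsum_le (mul_le_mul_of_nonneg_right hK0 (Real.rpow_nonneg hM0 q)))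
              (by positivity)
      _ = 8 ^ (1/q) * M := h8q
      _ ≤ 8 * M := by
            apply mul_le_mul_of_nonneg_right _ hM0
            calc (8:ℝ) ^ (1/q) ≤ 8 ^ (1:ℝ) :=
                  Real.rpow_le_rpow_of_exponent_le (by norm_num)
                    (by rw [div_le_one hq0]; exact hq)
            _ = 8 := Real.rpow_one 8
    -- summability of coefficients
    have hcnorm : ∀ n, ‖c (n+1)‖ = rd n := by
      intro n
      show ‖((rd n : ℝ) : ℂ)‖ = rd n
      rw [Complex.norm_real, Real.norm_eq_abs, abs_of_nonneg (hrdnn n)]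
    have hc0norm : ‖c 0‖ = r0 := by
      show ‖((r0 : ℝ) : ℂ)‖ = r0
      rw [Complex.norm_real, Real.norm_eq_abs, abs_of_nonneg hr0nn]
    have hgeo : Summable (fun n : ℕ => C0 * M * θ ^ n) :=
      (summable_geometric_of_lt_one (le_of_lt hθ0) hθ1).mul_left (C0 * M)
    have hsummable : Summable (fun n => ‖c n‖) := by
      rw [← summable_nat_add_iff 1]
      apply Summable.of_nonneg_of_le (fun n => norm_nonneg _) _ hgeo
      intro n
      rw [hcnorm n]
      exact hrd_bound n
    have htsum : ∑' n, ‖c n‖ ≤ C * M := by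
      rw [Summable.tsum_eq_zero_add hsummable]
      have hsub : Summable (fun n => ‖c (n+1)‖) := (summable_nat_add_iff 1).mpr hsummable
      have h1 : ∑' n, ‖c (n+1)‖ ≤ C0 * M * (1-θ)⁻¹ := by
        calc ∑' n, ‖c (n+1)‖ ≤ ∑' n : ℕ, C0 * M * θ ^ n :=
              Summable.tsum_le_tsum (fun n => by rw [hcnorm n]; exact hrd_bound n) hsub hgeo
        _ = (C0 * M) * (1-θ)⁻¹ := by
              rw [tsum_mul_left, tsum_geometric_of_lt_one (le_of_lt hθ0) hθ1]
      rw [hc0norm]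
      have hCM : C * M = 8 * M + C0 * M * (1-θ)⁻¹ := by rw [hC]; ring
      rw [hCM]
      linarith [hr0_bound]
    -- the series represents u
    have hhassum : ∀ x ∈ Set.Ico a b, HasSum (fun n => c n • A n x) (u x) := by
      rintro x ⟨hax, hxb⟩
      have hbnd : ∀ n : ℕ, ‖c (n+1) • A (n+1) x‖ ≤ (3 * M) * (2⁻¹ : ℝ) ^ n := by
        intro n
        have h2n : ((2:ℝ) ^ n) ≠ 0 := by positivity
        calc ‖c (n+1) • A (n+1) x‖ = ‖w (n+1) x - w n x‖ := by rw [hstepd n x hax hxb]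
        _ = ‖(w (n+1) x - u x) - (w n x - u x)‖ := by rw [sub_sub_sub_cancel_right]
        _ ≤ ‖w (n+1) x - u x‖ + ‖w n x - u x‖ := norm_sub_le _ _
        _ ≤ 2 * (M / 2 ^ (n+1)) + 2 * (M / 2 ^ n) :=
              add_le_add (hdev (n+1) x hax hxb) (hdev n x hax hxb)
        _ = (3 * M) * (2⁻¹ : ℝ) ^ n := by
              rw [pow_succ, inv_pow]
              field_simp
              ring
      have hsumm : Summable (fun n => c n • A n x) := by
        apply Summable.of_norm
        rw [← summable_nat_add_iff 1]
        apply Summable.of_nonneg_of_le (fun n => norm_nonneg _) hbnd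
        exact (summable_geometric_of_lt_one (by norm_num) (by norm_num)).mul_left (3 * M)
      have hpartial : ∀ m : ℕ, (∑ i ∈ Finset.range (m+1), c i • A i x) = w m x := by
        intro m
        induction m with
        | zero => rw [Finset.sum_range_one]; exact hstep0 x hax hxb
        | succ m ih =>
            rw [Finset.sum_range_succ, ih, hstepd m x hax hxb]
            abel
      have hlim : Filter.Tendsto (fun m => ∑ i ∈ Finset.range m, c i • A i x)
          Filter.atTop (nhds (u x)) := by
        apply (Filter.tendsto_add_atTop_iff_nat 1).mp
        have heq : (fun m => ∑ i ∈ Finset.range (m + 1), c i • A i x) = fun m => w m x := by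
          funext m; exact hpartial m
        rw [heq]
        rw [tendsto_iff_norm_sub_tendsto_zero]
        apply squeeze_zero (fun m => norm_nonneg _) (fun m => hdev m x hax hxb)
        have heq2 : (fun m : ℕ => 2 * (M / 2 ^ m)) = fun m : ℕ => (2 * M) * (2⁻¹ : ℝ) ^ m := by
          funext m
          rw [inv_pow]
          field_simp
        rw [heq2]
        have := (tendsto_pow_atTop_nhds_zero_of_lt_one
          (by norm_num : (0:ℝ) ≤ 2⁻¹) (by norm_num : (2⁻¹:ℝ) < 1)).const_mul (2 * M)
        simpa using this
      have h2 := hsumm.hasSum.tendsto_sum_nat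
      have huniq := tendsto_nhds_unique h2 hlim
      rw [← huniq]
      exact hsumm.hasSum
    have hatoms : ∀ n, IsAtom q a b (A n) := by
      intro n
      cases n with
      | zero => exact hA0atom
      | succ m => exact hAdatom m
    calc Unorm q a b u ≤ ENNReal.ofReal (∑' n, ‖c n‖) := by
          apply iInf_le_of_le c
          apply iInf_le_of_le A
          apply iInf_le_of_le hsummable
          apply iInf_le_of_le hatoms
          exact iInf_le _ hhassum
    _ ≤ ENNReal.ofReal (C * M) := ENNReal.ofReal_le_ofReal htsum
    _ = ENNReal.ofReal C * ENNReal.ofReal M := ENNReal.ofReal_mul hCnn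
    _ = ENNReal.ofReal C * Vnorm p a b u := by rw [hVM]

/-- **Comparison between `U^p` and `V^p` spaces**: (a) `U^p ⊂ V^p` for functions
vanishing at the right endpoint; (b) right-continuous `V^p` functions vanishing
at the left endpoint belong to `U^q` for every `q > p`. -/
theorem Up_Vp_comparison
    {H : Type*} [NormedAddCommGroup H] [InnerProductSpace ℂ H] [CompleteSpace H]
    (p q a b : ℝ) (hp : 1 ≤ p) (hpq : p < q) (hab : a < b) :
    -- (a) `‖u‖_{V^p} ≤ C(p) ‖u‖_{U^p}` when `lim_{t ↑ b} u(t) = 0`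
    (∃ C : ℝ, 0 ≤ C ∧ ∀ u : ℝ → H, Unorm p a b u < ⊤ →
      Filter.Tendsto u (nhdsWithin b (Set.Iio b)) (nhds 0) →
      Vnorm p a b u ≤ ENNReal.ofReal C * Unorm p a b u) ∧
    -- (b) `‖u‖_{U^q} ≤ C(p,q) ‖u‖_{V^p}` for `u` right-continuous with `u(a) = 0`
    (∃ C : ℝ, 0 ≤ C ∧ ∀ u : ℝ → H, Vnorm p a b u < ⊤ →
      (∀ t ∈ Set.Ico a b, Filter.Tendsto u (nhdsWithin t (Set.Ici t)) (nhds (u t))) →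
      u a = 0 →
      Unorm q a b u ≤ ENNReal.ofReal C * Vnorm p a b u) := by
  constructor
  · exact ⟨4, by norm_num, fun u hU _ => partA hp u hU⟩
  · exact partB hp hpq hab

end UVSpaces
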